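/- arXiv:1111.2091 — 3 statements merged into one kernel-verified Lean document; each statement's English description precedes it below -/
import Mathlib

section
/- Let $L_1,\ldots,L_n$ be real numbers with distinct values, let $\beta\in(0.5,1)$, and let $\varepsilon_n$ be a constant with $0<\varepsilon_n<(n-\lceil n\beta\rceil+1)^{-1}$. Then the function $G_n(\alpha)=(1-\varepsilon_n)\alpha+\frac{1}{n-\lceil n\beta\rceil+1}\sum_{i=1}^n(L_i-\alpha)^+$ has a unique minimizer over $\alpha\in\mathbb{R}$, namely $\alpha^*=L_{(\lceil n\beta\rceil)}$, the $\lceil n\beta\rceil$-th order statistic of $L_1,\ldots,L_n$. -/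
/-- For distinct reals `L 1, …, L n` (encoded via a permutation `σ` sorting
them strictly), `β ∈ (0.5,1)`, and `0 < ε < (n - ⌈nβ⌉ + 1)⁻¹`, the function
`G(α) = (1-ε)α + (n - ⌈nβ⌉ + 1)⁻¹ ∑ᵢ (Lᵢ - α)⁺` has a unique minimizer over ℝ,
namely the `⌈nβ⌉`-th order statistic of the `Lᵢ`. -/
theorem stmt0 (n : ℕ) (hn : 0 < n) (β ε : ℝ) (hβ : 1/2 < β ∧ β < 1)
    (L : Fin n → ℝ) (σ : Equiv.Perm (Fin n)) (hσ : StrictMono (fun i => L (σ i)))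
    (k : ℕ) (hk : k = ⌈(n : ℝ) * β⌉₊) (hk1 : 1 ≤ k) (hkn : k ≤ n)
    (hε : 0 < ε ∧ ε < ((n : ℝ) - k + 1)⁻¹) :
    ∀ G : ℝ → ℝ,
      (G = fun α => (1 - ε) * α + (∑ i, max (L i - α) 0) / ((n : ℝ) - k + 1)) →
      ((∀ α, G (L (σ ⟨k - 1, by omega⟩)) ≤ G α) ∧
        (∀ α, G α = G (L (σ ⟨k - 1, by omega⟩)) → α = L (σ ⟨k - 1, by omega⟩))) := by
  intro G hG
  obtain ⟨hε0, hε1⟩ := hε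
  have hkR : (k:ℝ) ≤ n := by exact_mod_cast hkn
  have hm : (0:ℝ) < (n:ℝ) - k + 1 := by linarith
  set αs := L (σ ⟨k - 1, by omega⟩) with hαs
  have hcount : ∀ (c : ℝ) (t : ℕ),
      ∑ j : Fin n, (if t ≤ (j:ℕ) then c else 0) = ((n - t : ℕ) : ℝ) * c := by
    intro c t
    rw [Fin.sum_univ_eq_sum_range (fun j => if t ≤ j then c else 0) n, ← Finset.sum_filter]
    have heq : (Finset.range n).filter (fun j => t ≤ j) = Finset.Ico t n := by
      ext j
      simp only [Finset.mem_filter, Finset.mem_range, Finset.mem_Ico]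
      omega
    rw [heq, Finset.sum_const, Nat.card_Ico, nsmul_eq_mul]
  have lemA : ∀ α, αs ≤ α →
      (∑ i, max (L i - αs) 0) ≤ (∑ i, max (L i - α) 0) + ((n:ℝ) - k) * (α - αs) := by
    intro α hα
    have hcast : ((n - k : ℕ):ℝ) = (n:ℝ) - k := by rw [Nat.cast_sub hkn]
    rw [← hcast, ← hcount (α - αs) k,
        ← Equiv.sum_comp σ (fun i => max (L i - αs) 0),
        ← Equiv.sum_comp σ (fun i => max (L i - α) 0), ← Finset.sum_add_distrib]
    apply Finset.sum_le_sum
    intro j _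
    by_cases hj : k ≤ (j:ℕ)
    · rw [if_pos hj]
      have h1 : L (σ j) - α ≤ max (L (σ j) - α) 0 := le_max_left _ _
      have h2 : (0:ℝ) ≤ max (L (σ j) - α) 0 := le_max_right _ _
      apply max_le <;> linarith
    · rw [if_neg hj]
      have hle : L (σ j) ≤ αs := by
        have hjle : j ≤ (⟨k-1, by omega⟩ : Fin n) := by
          rw [Fin.le_def]; simp only; omega
        exact hσ.monotone hjle
      have h2 : (0:ℝ) ≤ max (L (σ j) - α) 0 := le_max_right _ _
      rw [max_eq_right (by linarith : L (σ j) - αs ≤ 0)]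
      linarith
  have lemB : ∀ α, α ≤ αs →
      (∑ i, max (L i - αs) 0) + ((n:ℝ) - k + 1) * (αs - α) ≤ ∑ i, max (L i - α) 0 := by
    intro α hα
    have hcast : ((n - (k-1) : ℕ):ℝ) = (n:ℝ) - k + 1 := by
      rw [Nat.cast_sub (by omega : k - 1 ≤ n), Nat.cast_sub hk1]
      push_cast; ring
    rw [← hcast, ← hcount (αs - α) (k-1),
        ← Equiv.sum_comp σ (fun i => max (L i - αs) 0),
        ← Equiv.sum_comp σ (fun i => max (L i - α) 0), ← Finset.sum_add_distrib]
    apply Finset.sum_le_sum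
    intro j _
    by_cases hj : k - 1 ≤ (j:ℕ)
    · rw [if_pos hj]
      have hge : αs ≤ L (σ j) := by
        have hjge : (⟨k-1, by omega⟩ : Fin n) ≤ j := by
          rw [Fin.le_def]; simp only; omega
        exact hσ.monotone hjge
      have h1 : L (σ j) - α ≤ max (L (σ j) - α) 0 := le_max_left _ _
      rw [max_eq_left (by linarith : (0:ℝ) ≤ L (σ j) - αs)]
      linarith
    · rw [if_neg hj]
      have := max_le_max (sub_le_sub_left hα (L (σ j))) (le_refl (0:ℝ))
      linarith
  have expand : ∀ α, ((n:ℝ) - k + 1) * G α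
      = (1 - ε) * (((n:ℝ) - k + 1) * α) + ∑ i, max (L i - α) 0 := by
    intro α
    rw [hG]
    simp only
    field_simp
  have hem : ε * ((n:ℝ) - k + 1) < 1 := by
    have h := mul_lt_mul_of_pos_right hε1 hm
    rwa [inv_mul_cancel₀ hm.ne'] at h
  have key1 : ∀ α, αs ≤ α →
      (1 - ε * ((n:ℝ) - k + 1)) * (α - αs) ≤ ((n:ℝ) - k + 1) * (G α - G αs) := by
    intro α h
    have e1 := expand α
    have e2 := expand αs
    have h1 := lemA α h
    nlinarith [h1, e1, e2]
  have key2 : ∀ α, α ≤ αs →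
      ε * ((n:ℝ) - k + 1) * (αs - α) ≤ ((n:ℝ) - k + 1) * (G α - G αs) := by
    intro α h
    have e1 := expand α
    have e2 := expand αs
    have h1 := lemB α h
    nlinarith [h1, e1, e2]
  constructor
  · intro α
    rcases le_total αs α with h | h
    · have hk1' := key1 α h
      have h0 : 0 ≤ ((n:ℝ) - k + 1) * (G α - G αs) :=
        le_trans (mul_nonneg (by linarith) (by linarith)) hk1'
      nlinarith [h0, hm]
    · have hk2' := key2 α h
      have h0 : 0 ≤ ((n:ℝ) - k + 1) * (G α - G αs) :=
        le_trans (mul_nonneg (mul_nonneg hε0.le hm.le) (by linarith)) hk2'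
      nlinarith [h0, hm]
  · intro α hGα
    by_contra hne
    rcases lt_or_gt_of_ne hne with hlt | hgt
    · have hk2' := key2 α hlt.le
      have hz : ((n:ℝ) - k + 1) * (G α - G αs) = 0 := by rw [hGα]; ring
      have hpos : 0 < ε * ((n:ℝ) - k + 1) * (αs - α) :=
        mul_pos (mul_pos hε0 hm) (by linarith)
      linarith
    · have hk1' := key1 α hgt.le
      have hz : ((n:ℝ) - k + 1) * (G α - G αs) = 0 := by rw [hGα]; ring
      have hpos : 0 < (1 - ε * ((n:ℝ) - k + 1)) * (α - αs) :=
        mul_pos (by linarith) (by linarith)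
      linarith
end

section
/- Let $L_1,\ldots,L_n$ be distinct reals, $\beta\in(0.5,1)$, $k=\lceil n\beta\rceil$, and $0<\varepsilon_n<(n-k+1)^{-1}$. For $m\in\{-k+1,\ldots,n-k\}$, define $\Delta(m)=G_n(L_{(k+m+1)})-G_n(L_{(k+m)})$ where $G_n(\alpha)=(1-\varepsilon_n)\alpha+\frac{1}{n-k+1}\sum_{i=1}^n(L_i-\alpha)^+$. Then $\Delta(m)=(L_{(k+m+1)}-L_{(k+m)})\big((1-\varepsilon_n)-\frac{n-k-m}{n-k+1}\big)$; in particular $\Delta(0)>0$ and $\Delta(-1)<0$. -/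
lemma card_ge (n j : ℕ) (hj : j ≤ n) :
    (Finset.univ.filter fun i : Fin n => j ≤ (i:ℕ)).card = n - j := by
  rw [Finset.card_filter, Fin.sum_univ_eq_sum_range (fun i => if j ≤ i then 1 else 0),
    ← Finset.card_filter]
  have : Finset.filter (fun i => j ≤ i) (Finset.range n) = Finset.Ico j n := by
    ext i; simp [Finset.mem_Ico]; omega
  rw [this, Nat.card_Ico]

lemma sum_diff (n j : ℕ) (hj : j < n) (hj1 : 1 ≤ j) (f : Fin n → ℝ) (hf : StrictMono f) :
    (∑ i, max (f i - f ⟨j, hj⟩) 0) - (∑ i, max (f i - f ⟨j - 1, by omega⟩) 0)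
      = -(((n : ℝ) - j) * (f ⟨j, hj⟩ - f ⟨j - 1, by omega⟩)) := by
  set b := f ⟨j, hj⟩
  set a := f ⟨j - 1, by omega⟩
  have hab : a < b := hf (by simp [Fin.lt_def]; omega)
  rw [← Finset.sum_sub_distrib]
  have hterm : ∀ i : Fin n, max (f i - b) 0 - max (f i - a) 0
      = if j ≤ (i:ℕ) then a - b else 0 := by
    intro i
    by_cases h : j ≤ (i:ℕ)
    · have hb : b ≤ f i := hf.monotone (by simp [Fin.le_def]; omega)
      have ha : a ≤ f i := le_trans hab.le hb
      rw [if_pos h, max_eq_left (by linarith), max_eq_left (by linarith)]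
      ring
    · have : f i ≤ a := hf.monotone (by simp [Fin.le_def]; omega)
      rw [if_neg h, max_eq_right (by linarith), max_eq_right (by linarith)]
      ring
  rw [Finset.sum_congr rfl fun i _ => hterm i, ← Finset.sum_filter]
  rw [Finset.sum_const, card_ge n j hj.le, nsmul_eq_mul]
  have : ((n - j : ℕ) : ℝ) = (n : ℝ) - j := by
    rw [Nat.cast_sub hj.le]
  rw [this]; ring

/-- With distinct reals `L`, `k = ⌈nβ⌉`, `0 < ε < (n-k+1)⁻¹` and
`G(α) = (1-ε)α + (n-k+1)⁻¹ ∑ᵢ (Lᵢ-α)⁺`, the difference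
`Δ(m) = G(L₍k+m+1₎) - G(L₍k+m₎)` equals
`(L₍k+m+1₎ - L₍k+m₎)((1-ε) - (n-k-m)/(n-k+1))` for all valid `m`;
in particular `Δ(0) > 0` and `Δ(-1) < 0`. -/
theorem stmt2 (n : ℕ) (hn : 0 < n) (β ε : ℝ) (hβ : 1/2 < β ∧ β < 1)
    (L : Fin n → ℝ) (σ : Equiv.Perm (Fin n)) (hσ : StrictMono (fun i => L (σ i)))
    (k : ℕ) (hk : k = ⌈(n : ℝ) * β⌉₊) (hk1 : 1 ≤ k) (hkn : k ≤ n)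
    (hε : 0 < ε ∧ ε < ((n : ℝ) - k + 1)⁻¹) :
    ∀ G : ℝ → ℝ,
      (G = fun α => (1 - ε) * α + (∑ i, max (L i - α) 0) / ((n : ℝ) - k + 1)) →
      ((∀ m : ℤ, ∀ h1 : 1 - (k : ℤ) ≤ m, ∀ h2 : m ≤ (n : ℤ) - k - 1,
          G (L (σ ⟨((k : ℤ) + m).toNat, by omega⟩))
            - G (L (σ ⟨((k : ℤ) + m).toNat - 1, by omega⟩))
          = (L (σ ⟨((k : ℤ) + m).toNat, by omega⟩)
              - L (σ ⟨((k : ℤ) + m).toNat - 1, by omega⟩))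
            * ((1 - ε) - ((n : ℝ) - k - (m : ℝ)) / ((n : ℝ) - k + 1)))
      ∧ (∀ h : k < n,
          0 < G (L (σ ⟨k, h⟩)) - G (L (σ ⟨k - 1, by omega⟩)))
      ∧ (∀ h : 2 ≤ k,
          G (L (σ ⟨k - 1, by omega⟩)) - G (L (σ ⟨k - 2, by omega⟩)) < 0)) := by
  intro G hG
  have hden : (0 : ℝ) < (n : ℝ) - k + 1 := by
    have : (k : ℝ) ≤ n := Nat.cast_le.mpr hkn
    linarith
  -- general formula
  have main : ∀ m : ℤ, ∀ h1 : 1 - (k : ℤ) ≤ m, ∀ h2 : m ≤ (n : ℤ) - k - 1,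
      G (L (σ ⟨((k : ℤ) + m).toNat, by omega⟩))
        - G (L (σ ⟨((k : ℤ) + m).toNat - 1, by omega⟩))
      = (L (σ ⟨((k : ℤ) + m).toNat, by omega⟩)
          - L (σ ⟨((k : ℤ) + m).toNat - 1, by omega⟩))
        * ((1 - ε) - ((n : ℝ) - k - (m : ℝ)) / ((n : ℝ) - k + 1)) := by
    intro m h1 h2
    set j : ℕ := ((k : ℤ) + m).toNat with hjdef
    have hjn : j < n := by omega
    have hj1 : 1 ≤ j := by omega
    set f : Fin n → ℝ := fun i => L (σ i) with hf
    have hsum : ∀ α : ℝ, (∑ i, max (L i - α) 0) = ∑ i, max (f i - α) 0 := by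
      intro α
      exact (Equiv.sum_comp σ (fun i => max (L i - α) 0)).symm
    set b := f ⟨j, hjn⟩
    set a := f ⟨j - 1, by omega⟩
    have hd := sum_diff n j hjn hj1 f hσ
    have hjR : (j : ℝ) = (k : ℝ) + (m : ℝ) := by
      have : (j : ℤ) = (k : ℤ) + m := by omega
      exact_mod_cast congrArg (Int.cast : ℤ → ℝ) this
    rw [hG]
    simp only [hsum]
    show (1 - ε) * b + (∑ i, max (f i - b) 0) / ((n:ℝ) - k + 1)
        - ((1 - ε) * a + (∑ i, max (f i - a) 0) / ((n:ℝ) - k + 1))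
        = (b - a) * ((1 - ε) - ((n : ℝ) - k - (m : ℝ)) / ((n : ℝ) - k + 1))
    rw [hjR] at hd
    field_simp
    linear_combination hd
  refine ⟨main, ?_, ?_⟩
  · intro h
    have := main 0 (by omega) (by omega)
    have e1 : ((k : ℤ) + 0).toNat = k := by omega
    rw [show (⟨((k : ℤ) + 0).toNat, by omega⟩ : Fin n) = ⟨k, h⟩ from
        Fin.ext (show ((k : ℤ) + 0).toNat = k by omega),
      show (⟨((k : ℤ) + 0).toNat - 1, by omega⟩ : Fin n) = ⟨k - 1, by omega⟩ from
        Fin.ext (show ((k : ℤ) + 0).toNat - 1 = k - 1 by omega)] at this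
    rw [this]
    have hlt : L (σ ⟨k - 1, by omega⟩) < L (σ ⟨k, h⟩) := hσ (by simp [Fin.lt_def]; omega)
    have hkr : (k : ℝ) ≤ (n : ℝ) := Nat.cast_le.mpr hkn
    have hcoef : 0 < (1 - ε) - ((n : ℝ) - k - (0:ℤ)) / ((n : ℝ) - k + 1) := by
      rw [sub_pos, div_lt_iff₀ hden]
      have hε2 : ε < ((n : ℝ) - k + 1)⁻¹ := hε.2
      rw [inv_eq_one_div, lt_div_iff₀ hden] at hε2
      push_cast
      nlinarith
    exact mul_pos (by linarith) hcoef
  · intro h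
    have := main (-1) (by omega) (by omega)
    rw [show (⟨((k : ℤ) + (-1)).toNat, by omega⟩ : Fin n) = ⟨k - 1, by omega⟩ from
        Fin.ext (show ((k : ℤ) + (-1)).toNat = k - 1 by omega),
      show (⟨((k : ℤ) + (-1)).toNat - 1, by omega⟩ : Fin n) = ⟨k - 2, by omega⟩ from
        Fin.ext (show ((k : ℤ) + (-1)).toNat - 1 = k - 2 by omega)] at this
    rw [this]
    have hlt : L (σ ⟨k - 2, by omega⟩) < L (σ ⟨k - 1, by omega⟩) := hσ (by simp [Fin.lt_def]; omega)
    have hcoef : (1 - ε) - ((n : ℝ) - k - ((-1 : ℤ):ℝ)) / ((n : ℝ) - k + 1) < 0 := by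
      have : ((n : ℝ) - k - ((-1 : ℤ):ℝ)) / ((n : ℝ) - k + 1) = 1 := by
        push_cast; field_simp; ring
      rw [this]
      linarith [hε.1]
    exact mul_neg_of_pos_of_neg (by linarith) hcoef
end

section
/- If $\varepsilon_n=0$, the minimizer of $\alpha\mapsto\alpha+\frac{1}{n-\lceil n\beta\rceil+1}\sum_{i=1}^n(L_i-\alpha)^+$ over $\mathbb{R}$ is not unique: both $\alpha=L_{(\lceil n\beta\rceil)}$ and $\alpha=L_{(\lceil n\beta\rceil-1)}$ attain the minimum (assuming $\lceil n\beta\rceil\ge 2$ and the $L_i$ are distinct). -/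
/-- If `ε = 0`, the minimizer of
`α ↦ α + (n-⌈nβ⌉+1)⁻¹ ∑ᵢ (Lᵢ-α)⁺` over ℝ is not unique: both `L₍⌈nβ⌉₎` and
`L₍⌈nβ⌉-1₎` attain the minimum (assuming `⌈nβ⌉ ≥ 2` and distinct `Lᵢ`). -/
theorem stmt3 (n : ℕ) (hn : 0 < n) (β : ℝ) (hβ : 1/2 < β ∧ β < 1)
    (L : Fin n → ℝ) (σ : Equiv.Perm (Fin n)) (hσ : StrictMono (fun i => L (σ i)))
    (k : ℕ) (hk : k = ⌈(n : ℝ) * β⌉₊) (hk2 : 2 ≤ k) (hkn : k ≤ n) :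
    ∀ G : ℝ → ℝ,
      (G = fun α => α + (∑ i, max (L i - α) 0) / ((n : ℝ) - k + 1)) →
      ((∀ α, G (L (σ ⟨k - 1, by omega⟩)) ≤ G α) ∧
        (∀ α, G (L (σ ⟨k - 2, by omega⟩)) ≤ G α) ∧
        G (L (σ ⟨k - 1, by omega⟩)) = G (L (σ ⟨k - 2, by omega⟩)) ∧
        L (σ ⟨k - 1, by omega⟩) ≠ L (σ ⟨k - 2, by omega⟩)) := by
  intro G hG
  set s : Fin n → ℝ := fun j => L (σ j) with hs
  have hm : (0:ℝ) < (n:ℝ) - k + 1 := by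
    have : (k:ℝ) ≤ n := by exact_mod_cast hkn
    linarith
  set a : Fin n := ⟨k - 1, by omega⟩ with ha
  set b : Fin n := ⟨k - 2, by omega⟩ with hb
  have hab : s b < s a := hσ (by simp [Fin.lt_def, ha, hb]; omega)
  set S : Finset (Fin n) := Finset.univ.filter (fun j => k - 1 ≤ j.val) with hS
  have hcard : (S.card : ℝ) = (n:ℝ) - k + 1 := by
    have h1 : S.card = n - (k - 1) := by
      rw [hS]
      rw [show (Finset.univ.filter (fun j : Fin n => k - 1 ≤ j.val)) = Finset.Ici a by
        ext j; simp [Finset.mem_Ici, Fin.le_def, ha]]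
      simp [Fin.card_Ici, ha]
    rw [h1]
    have : n - (k - 1) = n - k + 1 := by omega
    rw [this]
    push_cast [hkn]
    ring
  -- reindex general sums
  have hsum : ∀ α : ℝ, (∑ i, max (L i - α) 0) = ∑ j, max (s j - α) 0 := by
    intro α
    exact (Equiv.sum_comp σ (fun i => max (L i - α) 0)).symm
  -- lower bound
  have key : ∀ α, (∑ j ∈ S, s j) / ((n:ℝ) - k + 1) ≤ G α := by
    intro α
    have h1 : ∑ j ∈ S, (s j - α) ≤ ∑ j, max (s j - α) 0 :=
      le_trans (Finset.sum_le_sum fun j _ => le_max_left _ _)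
        (Finset.sum_le_sum_of_subset_of_nonneg (Finset.subset_univ S)
          (fun j _ _ => le_max_right _ _))
    rw [Finset.sum_sub_distrib, Finset.sum_const, nsmul_eq_mul, hcard] at h1
    rw [hG]
    simp only [hsum]
    rw [div_le_iff₀ hm]
    have h2 : (α + (∑ j, max (s j - α) 0) / ((n:ℝ) - k + 1)) * ((n:ℝ) - k + 1)
        = ((n:ℝ) - k + 1) * α + ∑ j, max (s j - α) 0 := by
      field_simp
    rw [h2]
    linarith
  -- value at a point c dominating the complement of S and dominated by S
  have hval : ∀ c : Fin n, (∀ j : Fin n, j ∉ S → s j ≤ s c) → (∀ j ∈ S, s c ≤ s j) →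
      G (s c) = (∑ j ∈ S, s j) / ((n:ℝ) - k + 1) := by
    intro c h1 h2
    have hsplit : (∑ j, max (s j - s c) 0) = ∑ j ∈ S, (s j - s c) := by
      rw [← Finset.sum_subset (Finset.subset_univ S)
        (fun j _ hj => max_eq_right (by linarith [h1 j hj]))]
      exact Finset.sum_congr rfl fun j hj => max_eq_left (by linarith [h2 j hj])
    rw [hG]
    simp only [hsum, hsplit]
    rw [Finset.sum_sub_distrib, Finset.sum_const, nsmul_eq_mul, hcard]
    field_simp
    ring
  have hvala : G (s a) = (∑ j ∈ S, s j) / ((n:ℝ) - k + 1) := by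
    apply hval
    · intro j hj
      have : j < a := by
        simp [hS, Finset.mem_filter] at hj
        simp [Fin.lt_def, ha]; omega
      exact le_of_lt (hσ this)
    · intro j hj
      have : a ≤ j := by
        simp [hS, Finset.mem_filter] at hj
        simp [Fin.le_def, ha]; omega
      exact hσ.monotone this
  have hvalb : G (s b) = (∑ j ∈ S, s j) / ((n:ℝ) - k + 1) := by
    apply hval
    · intro j hj
      have : j ≤ b := by
        simp [hS, Finset.mem_filter] at hj
        simp [Fin.le_def, hb]; omega
      exact hσ.monotone this
    · intro j hj
      have : b ≤ j := by
        simp [hS, Finset.mem_filter] at hj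
        simp [Fin.le_def, hb]; omega
      exact hσ.monotone this
  refine ⟨fun α => ?_, fun α => ?_, ?_, ?_⟩
  · rw [show L (σ a) = s a from rfl, hvala]; exact key α
  · rw [show L (σ b) = s b from rfl, hvalb]; exact key α
  · rw [show L (σ a) = s a from rfl, show L (σ b) = s b from rfl, hvala, hvalb]
  · exact ne_of_gt hab
end
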